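/- If −∞ < α < β < +∞, μ ∈ [α,β], and σ² = (β−μ)(μ−α), then the set M of probability measures on [α,β] with mean μ and second moment μ²+σ² consists of exactly one measure: the two-point measure assigning mass (β−μ)/(β−α) to α and mass (μ−α)/(β−α) to β. -/

import Mathlib

open MeasureTheory Set
open scoped ENNReal

lemma my_integrable_dirac (f : ℝ → ℝ) (a : ℝ) : Integrable f (Measure.dirac a) :=
  (integrable_const (f a)).congr (ae_eq_dirac f).symm

lemma my_integrable_two_point (f : ℝ → ℝ) (a b : ℝ) (c d : ℝ≥0∞) (hc : c ≠ ⊤) (hd : d ≠ ⊤) :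
    Integrable f (c • Measure.dirac a + d • Measure.dirac b) :=
  ((my_integrable_dirac f a).smul_measure hc).add_measure
    ((my_integrable_dirac f b).smul_measure hd)

lemma my_integral_two_point (f : ℝ → ℝ) (a b : ℝ) (c d : ℝ≥0∞) (hc : c ≠ ⊤) (hd : d ≠ ⊤) :
    ∫ t, f t ∂(c • Measure.dirac a + d • Measure.dirac b) = c.toReal * f a + d.toReal * f b := by
  rw [integral_add_measure ((my_integrable_dirac f a).smul_measure hc)
      ((my_integrable_dirac f b).smul_measure hd), integral_smul_measure, integral_smul_measure,
      integral_dirac, integral_dirac]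
  simp [smul_eq_mul]

theorem moment_set_singleton (α β μ σ : ℝ) (hab : α < β) (hμ : μ ∈ Set.Icc α β)
    (hσ : σ ^ 2 = (β - μ) * (μ - α)) :
    {Q : Measure ℝ | IsProbabilityMeasure Q ∧ Q (Set.Icc α β)ᶜ = 0 ∧
        Integrable id Q ∧ Integrable (fun t => t ^ 2) Q ∧
        (∫ t, t ∂Q) = μ ∧ (∫ t, t ^ 2 ∂Q) = μ ^ 2 + σ ^ 2} =
      {ENNReal.ofReal ((β - μ) / (β - α)) • Measure.dirac α +
        ENNReal.ofReal ((μ - α) / (β - α)) • Measure.dirac β} := by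
  have hba : (0:ℝ) < β - α := by linarith
  have hne : β - α ≠ 0 := hba.ne'
  set a : ℝ := (β - μ) / (β - α) with ha_def
  set b : ℝ := (μ - α) / (β - α) with hb_def
  have ha0 : 0 ≤ a := div_nonneg (by linarith [hμ.2]) hba.le
  have hb0 : 0 ≤ b := div_nonneg (by linarith [hμ.1]) hba.le
  have hsum : a + b = 1 := by rw [ha_def, hb_def, ← add_div, div_eq_one_iff_eq hne]; ring
  have hcne : (ENNReal.ofReal a) ≠ ⊤ := ENNReal.ofReal_ne_top
  have hdne : (ENNReal.ofReal b) ≠ ⊤ := ENNReal.ofReal_ne_top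
  ext Q
  simp only [Set.mem_setOf_eq, Set.mem_singleton_iff]
  constructor
  · rintro ⟨hP, hsupp, hI1, hI2, hm1, hm2⟩
    have hae : ∀ᵐ t ∂Q, t ∈ Set.Icc α β := by
      rw [ae_iff]
      convert hsupp using 2
      rfl
    -- integrability pieces
    have hI1' : Integrable (fun t : ℝ => (α + β) * t) Q := by
      simpa using hI1.const_mul (α + β)
    have hI2' : Integrable (fun t : ℝ => -(t ^ 2)) Q := hI2.neg
    have hI3 : Integrable (fun t : ℝ => -(t ^ 2) + (α + β) * t) Q := hI2'.add hI1'
    have hfeq : (fun t : ℝ => (β - t) * (t - α)) =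
        fun t => -(t ^ 2) + (α + β) * t - α * β := by funext t; ring
    have hIf : Integrable (fun t : ℝ => (β - t) * (t - α)) Q := by
      rw [hfeq]; exact hI3.sub (integrable_const (α * β))
    have hint0 : ∫ t, (β - t) * (t - α) ∂Q = 0 := by
      rw [hfeq, integral_sub hI3 (integrable_const (α * β)), integral_add hI2' hI1',
          integral_neg, integral_const_mul, hm2, hm1, integral_const]
      simp only [measure_univ, probReal_univ, ENNReal.toReal_one, one_smul, smul_eq_mul]
      nlinarith [hσ]
    have hnn : 0 ≤ᵐ[Q] fun t => (β - t) * (t - α) := by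
      filter_upwards [hae] with t ht
      simp only [Pi.zero_apply]
      nlinarith [ht.1, ht.2]
    have hzero : (fun t => (β - t) * (t - α)) =ᵐ[Q] 0 :=
      (integral_eq_zero_iff_of_nonneg_ae hnn hIf).mp hint0
    have haepair : ∀ᵐ t ∂Q, t ∈ ({α, β} : Set ℝ) := by
      filter_upwards [hzero] with t ht
      have ht' : (β - t) * (t - α) = 0 := ht
      simp only [Set.mem_insert_iff, Set.mem_singleton_iff]
      rcases mul_eq_zero.mp ht' with h | h
      · right; linarith
      · left; linarith
    have hpairc : Q ({α, β} : Set ℝ)ᶜ = 0 := by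
      rw [ae_iff] at haepair
      convert haepair using 2
      rfl
    have hmeas_pair : MeasurableSet ({α, β} : Set ℝ) := (measurableSet_singleton β).insert α
    have hQs : ∀ s : Set ℝ, MeasurableSet s → Q s = Q (s ∩ {α, β}) := by
      intro s _
      have h1 := measure_inter_add_diff (μ := Q) s hmeas_pair
      have h2 : Q (s \ ({α, β} : Set ℝ)) = 0 :=
        measure_mono_null (fun x hx => hx.2) hpairc
      rw [← h1, h2, add_zero]
    have hpairQ : Q ({α, β} : Set ℝ) = Q {α} + Q {β} := by
      rw [Set.insert_eq, measure_union (by simp [hab.ne]) (measurableSet_singleton β)]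
    have hαfin : Q {α} ≠ ⊤ := measure_ne_top Q _
    have hβfin : Q {β} ≠ ⊤ := measure_ne_top Q _
    set p := (Q {α}).toReal with hp_def
    set q := (Q {β}).toReal with hq_def
    have hpq1 : p + q = 1 := by
      have huniv : Q Set.univ = Q {α} + Q {β} := by
        rw [hQs Set.univ MeasurableSet.univ, Set.univ_inter, hpairQ]
      rw [measure_univ] at huniv
      have := congrArg ENNReal.toReal huniv
      rw [ENNReal.toReal_add hαfin hβfin] at this
      simpa using this.symm
    have hQeq : Q = Q {α} • Measure.dirac α + Q {β} • Measure.dirac β := by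
      ext s hs
      rw [hQs s hs]
      simp only [Measure.add_apply, Measure.smul_apply, smul_eq_mul,
        Measure.dirac_apply' _ hs]
      by_cases hα : α ∈ s <;> by_cases hβ : β ∈ s
      · have hss : s ∩ {α, β} = {α, β} := Set.inter_eq_right.mpr (by
          rintro x (rfl | rfl)
          · exact hα
          · exact hβ)
        rw [hss, hpairQ]
        simp [Set.indicator_of_mem, hα, hβ]
      · have hss : s ∩ {α, β} = {α} := by
          ext x
          simp only [Set.mem_inter_iff, Set.mem_insert_iff, Set.mem_singleton_iff]
          constructor
          · rintro ⟨hx, rfl | rfl⟩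
            · rfl
            · exact absurd hx hβ
          · rintro rfl; exact ⟨hα, Or.inl rfl⟩
        rw [hss]
        simp [Set.indicator_of_mem, Set.indicator_of_notMem, hα, hβ]
      · have hss : s ∩ {α, β} = {β} := by
          ext x
          simp only [Set.mem_inter_iff, Set.mem_insert_iff, Set.mem_singleton_iff]
          constructor
          · rintro ⟨hx, rfl | rfl⟩
            · exact absurd hx hα
            · rfl
          · rintro rfl; exact ⟨hβ, Or.inr rfl⟩
        rw [hss]
        simp [Set.indicator_of_mem, Set.indicator_of_notMem, hα, hβ]
      · have hss : s ∩ {α, β} = ∅ := by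
          ext x
          simp only [Set.mem_inter_iff, Set.mem_insert_iff, Set.mem_singleton_iff,
            Set.mem_empty_iff_false, iff_false, not_and]
          rintro hx (rfl | rfl)
          · exact hα hx
          · exact hβ hx
        rw [hss]
        simp [Set.indicator_of_notMem, hα, hβ]
    have hmean2 : p * α + q * β = μ := by
      rw [hQeq] at hm1
      rw [my_integral_two_point (fun t : ℝ => t) α β _ _ hαfin hβfin] at hm1
      exact hm1
    have hp : p = a := by
      rw [ha_def, eq_div_iff hne]
      linear_combination β * hpq1 - hmean2
    have hq : q = b := by
      rw [hb_def, eq_div_iff hne]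
      linear_combination hmean2 - α * hpq1
    have hQα : Q {α} = ENNReal.ofReal a := by
      rw [← hp, hp_def, ENNReal.ofReal_toReal hαfin]
    have hQβ : Q {β} = ENNReal.ofReal b := by
      rw [← hq, hq_def, ENNReal.ofReal_toReal hβfin]
    rw [hQα, hQβ] at hQeq
    exact hQeq
  · rintro rfl
    have hprob : IsProbabilityMeasure
        (ENNReal.ofReal a • Measure.dirac α + ENNReal.ofReal b • Measure.dirac β) := by
      constructor
      simp [Measure.add_apply, ← ENNReal.ofReal_add ha0 hb0, hsum]
    refine ⟨hprob, ?_, my_integrable_two_point _ _ _ _ _ hcne hdne,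
      my_integrable_two_point _ _ _ _ _ hcne hdne, ?_, ?_⟩
    · have hmα : α ∈ Set.Icc α β := ⟨le_refl _, hab.le⟩
      have hmβ : β ∈ Set.Icc α β := ⟨hab.le, le_refl _⟩
      simp [Measure.add_apply, Measure.dirac_apply' _ (measurableSet_Icc.compl),
        Set.indicator_of_notMem, hmα, hmβ]
    · rw [my_integral_two_point (fun t : ℝ => t) α β _ _ hcne hdne,
        ENNReal.toReal_ofReal ha0, ENNReal.toReal_ofReal hb0, ha_def, hb_def]
      field_simp
      ring
    · rw [my_integral_two_point (fun t : ℝ => t ^ 2) α β _ _ hcne hdne,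
        ENNReal.toReal_ofReal ha0, ENNReal.toReal_ofReal hb0, hσ, ha_def, hb_def]
      field_simp
      ring
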